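/- Let (A_m)_{m≥0} be a formal orbit portrait of valence N ≥ 2 with degrees (d_m)_{m≥1} and let m ≥ 0. Then no complementary arc of A_m has length exactly 1/d_{m+1}; the sum of the lengths of the non-critical complementary arcs of A_m is strictly less than 1/d_{m+1}; and A_m has at least one critical complementary arc, i.e. a complementary arc of length strictly greater than 1/d_{m+1}. -/

import Mathlib

/-- The unique representative in `[0,1)` of `b - a`; for `a ≠ b` this is the
unique representative of `b − a` in `(0,1)`, the length `ℓ(a,b)` of the arc from `a` to `b`. -/
noncomputable def arcLen (a b : UnitAddCircle) : ℝ :=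
  ((AddCircle.equivIco 1 0) (b - a) : ℝ)

/-- The open arc `(a,b) = {a + t : 0 < t < ℓ(a,b)}` in `ℝ/ℤ`. -/
def openArc (a b : UnitAddCircle) : Set UnitAddCircle :=
  {x | ∃ t : ℝ, 0 < t ∧ t < arcLen a b ∧ x = a + (t : UnitAddCircle)}

/-- `(a,b,c)` is in positive cyclic order: `ℓ(a,b) < ℓ(a,c)`. -/
def PosCyclic (a b c : UnitAddCircle) : Prop := arcLen a b < arcLen a c

/-- A formal orbit portrait of valence `N` with degrees `d`: a sequence of
`N`-element subsets `A m` of `ℝ/ℤ` such that `θ ↦ d_{m+1}·θ` maps `A m`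
bijectively onto `A (m+1)` and carries every triple of pairwise distinct points
of `A m` in positive cyclic order to a triple in positive cyclic order. -/
def IsFormalPortrait (N : ℕ) (d : ℕ → ℕ) (A : ℕ → Set UnitAddCircle) : Prop :=
  ∀ m : ℕ,
    (A m).Finite ∧ (A m).ncard = N ∧
    Set.BijOn (fun θ => d (m + 1) • θ) (A m) (A (m + 1)) ∧
    ∀ a ∈ A m, ∀ b ∈ A m, ∀ c ∈ A m, a ≠ b → a ≠ c → b ≠ c →
      PosCyclic a b c →
        PosCyclic (d (m + 1) • a) (d (m + 1) • b) (d (m + 1) • c)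

/-- `(a,b)` is a complementary arc of `A`: `a, b ∈ A`, `a ≠ b`, and the open
arc `(a,b)` contains no point of `A`. -/
def IsComplArc (A : Set UnitAddCircle) (a b : UnitAddCircle) : Prop :=
  a ≠ b ∧ a ∈ A ∧ b ∈ A ∧ openArc a b ∩ A = ∅

lemma arcLen_nonneg (a b : UnitAddCircle) : 0 ≤ arcLen a b :=
  ((AddCircle.equivIco 1 0) (b - a)).2.1

lemma arcLen_lt_one (a b : UnitAddCircle) : arcLen a b < 1 := by
  have := ((AddCircle.equivIco 1 0) (b - a)).2.2
  unfold arcLen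
  exact lt_of_lt_of_eq this (zero_add 1)

lemma coe_arcLen (a b : UnitAddCircle) : ((arcLen a b : ℝ) : UnitAddCircle) = b - a := by
  exact (AddCircle.equivIco 1 0).symm_apply_apply (b - a)

lemma arcLen_eq_fract {a b : UnitAddCircle} {r : ℝ} (h : b - a = (r : UnitAddCircle)) :
    arcLen a b = Int.fract r := by
  unfold arcLen
  rw [h]
  have := AddCircle.coe_equivIco_mk_apply (p := (1:ℝ)) (x := r)
  simpa using this

lemma arcLen_eq_zero_iff {a b : UnitAddCircle} : arcLen a b = 0 ↔ a = b := by
  constructor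
  · intro h
    have h2 := coe_arcLen a b
    rw [h] at h2
    have : b - a = 0 := by rw [← h2]; norm_num
    have := sub_eq_zero.mp this
    exact this.symm
  · rintro rfl
    have : a - a = ((0:ℝ) : UnitAddCircle) := by norm_num
    rw [arcLen_eq_fract this]
    simp

lemma arcLen_pos {a b : UnitAddCircle} (h : a ≠ b) : 0 < arcLen a b :=
  lt_of_le_of_ne (arcLen_nonneg a b) (fun e => h (arcLen_eq_zero_iff.mp e.symm))

lemma arcLen_inj {a b c : UnitAddCircle} (h : arcLen a b = arcLen a c) : b = c := by
  have h1 := coe_arcLen a b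
  have h2 := coe_arcLen a c
  rw [h] at h1
  rw [h1] at h2
  have : b - a = c - a := h2
  exact sub_left_injective this

lemma mem_openArc_iff {a b x : UnitAddCircle} :
    x ∈ openArc a b ↔ 0 < arcLen a x ∧ arcLen a x < arcLen a b := by
  constructor
  · rintro ⟨t, ht0, htb, rfl⟩
    have hsub : a + (t : UnitAddCircle) - a = ((t:ℝ) : UnitAddCircle) := by abel
    have : arcLen a (a + (t : UnitAddCircle)) = Int.fract t := arcLen_eq_fract hsub
    rw [this, Int.fract_eq_self.mpr ⟨le_of_lt ht0, lt_trans htb (arcLen_lt_one a b)⟩]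
    exact ⟨ht0, htb⟩
  · rintro ⟨h0, hb⟩
    refine ⟨arcLen a x, h0, hb, ?_⟩
    rw [coe_arcLen]
    abel

lemma isComplArc_iff {A : Set UnitAddCircle} {a b : UnitAddCircle} :
    IsComplArc A a b ↔ a ≠ b ∧ a ∈ A ∧ b ∈ A ∧
      ∀ x ∈ A, x ≠ a → arcLen a b ≤ arcLen a x := by
  constructor
  · rintro ⟨hab, ha, hb, hempty⟩
    refine ⟨hab, ha, hb, fun x hx hxa => ?_⟩
    by_contra hlt
    push_neg at hlt
    have hx0 : 0 < arcLen a x := arcLen_pos (Ne.symm hxa)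
    have : x ∈ openArc a b ∩ A := ⟨mem_openArc_iff.mpr ⟨hx0, hlt⟩, hx⟩
    rw [hempty] at this
    exact this
  · rintro ⟨hab, ha, hb, hmin⟩
    refine ⟨hab, ha, hb, ?_⟩
    ext x
    simp only [Set.mem_inter_iff, Set.mem_empty_iff_false, iff_false, not_and]
    intro hoa hx
    rcases mem_openArc_iff.mp hoa with ⟨h0, hlt⟩
    have hxa : x ≠ a := fun e => by rw [e] at h0; simp [arcLen_eq_zero_iff.mpr rfl] at h0
    exact absurd hlt (not_lt.mpr (hmin x hx hxa))

/-- uniqueness of the successor -/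
lemma complArc_right_unique {A : Set UnitAddCircle} {a b b' : UnitAddCircle}
    (h : IsComplArc A a b) (h' : IsComplArc A a b') : b = b' := by
  rw [isComplArc_iff] at h h'
  have h1 := h.2.2.2 b' h'.2.2.1 (Ne.symm h'.1)
  have h2 := h'.2.2.2 b h.2.2.1 (Ne.symm h.1)
  exact arcLen_inj (le_antisymm h1 h2)

/-- existence of the successor -/
lemma complArc_exists {A : Set UnitAddCircle} (hfin : A.Finite) {a x : UnitAddCircle}
    (ha : a ∈ A) (hx : x ∈ A) (hxa : x ≠ a) : ∃ b, IsComplArc A a b := by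
  classical
  set s := hfin.toFinset.erase a with hs
  have hne : s.Nonempty := ⟨x, Finset.mem_erase.mpr ⟨hxa, hfin.mem_toFinset.mpr hx⟩⟩
  obtain ⟨b, hbs, hbmin⟩ := s.exists_min_image (fun y => arcLen a y) hne
  rw [Finset.mem_erase, hfin.mem_toFinset] at hbs
  refine ⟨b, isComplArc_iff.mpr ⟨Ne.symm hbs.1, ha, hbs.2, fun y hy hya => ?_⟩⟩
  exact hbmin y (Finset.mem_erase.mpr ⟨hya, hfin.mem_toFinset.mpr hy⟩)

lemma fract_of_neg {x : ℝ} (h1 : -1 < x) (h2 : x < 0) : Int.fract x = x + 1 := by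
  have : Int.fract (x + 1) = x + 1 := Int.fract_eq_self.mpr ⟨by linarith, by linarith⟩
  rw [← this]
  rw [show x + 1 = x + (1:ℤ) by push_cast; ring, Int.fract_add_intCast]

lemma arcLen_base (c a b : UnitAddCircle) :
    arcLen a b = Int.fract (arcLen c b - arcLen c a) := by
  apply arcLen_eq_fract
  rw [show ((arcLen c b - arcLen c a : ℝ) : UnitAddCircle)
      = ((arcLen c b : ℝ) : UnitAddCircle) - ((arcLen c a : ℝ) : UnitAddCircle)
    from QuotientAddGroup.mk_sub _ _ _, coe_arcLen, coe_arcLen]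
  abel

/-- uniqueness of the predecessor -/
lemma complArc_left_unique {A : Set UnitAddCircle} {a b c : UnitAddCircle}
    (h : IsComplArc A a c) (h' : IsComplArc A b c) : a = b := by
  by_contra hab
  rw [isComplArc_iff] at h h'
  set u := arcLen a b with hu
  set v := arcLen a c with hv
  have hu0 : 0 < u := arcLen_pos hab
  have hu1 : u < 1 := arcLen_lt_one a b
  have hv0 : 0 < v := arcLen_pos h.1
  have hvu : v ≤ u := h.2.2.2 b h'.2.1 (Ne.symm hab)
  have hvne : v ≠ u := fun e => h'.1 (arcLen_inj e).symm
  have hvu' : v < u := lt_of_le_of_ne hvu hvne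
  -- arcLen b c = v - u + 1, arcLen b a = 1 - u
  have hbc : arcLen b c = v - u + 1 := by
    rw [arcLen_base a b c, ← hv, ← hu, fract_of_neg (by linarith) (by linarith)]
  have hba : arcLen b a = 1 - u := by
    rw [arcLen_base a b a, ← hu]
    have : arcLen a a = 0 := arcLen_eq_zero_iff.mpr rfl
    rw [this, fract_of_neg (by linarith) (by linarith)]
    ring
  have := h'.2.2.2 a h.2.1 hab
  rw [hbc, hba] at this
  linarith

open scoped Classical in
noncomputable def succFn (A : Set UnitAddCircle) (a : UnitAddCircle) : UnitAddCircle :=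
  if h : ∃ b, IsComplArc A a b then h.choose else a

lemma succFn_spec {A : Set UnitAddCircle} {a : UnitAddCircle} (h : ∃ b, IsComplArc A a b) :
    IsComplArc A a (succFn A a) := by
  rw [succFn, dif_pos h]
  exact h.choose_spec

lemma exists_succ {A : Set UnitAddCircle} (hfin : A.Finite) (hcard : 2 ≤ A.ncard)
    {a : UnitAddCircle} (ha : a ∈ A) : ∃ b, IsComplArc A a b := by
  obtain ⟨x, hx, hxa⟩ := Set.exists_ne_of_one_lt_ncard (s := A) (by omega) a
  exact complArc_exists hfin ha hx hxa

lemma sum_compl_arcs {A : Set UnitAddCircle} (hfin : A.Finite) (hcard : 2 ≤ A.ncard) :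
    ∑ a ∈ hfin.toFinset, arcLen a (succFn A a) = 1 := by
  classical
  set s := hfin.toFinset with hsdef
  have hmem : ∀ {x}, x ∈ s ↔ x ∈ A := fun {x} => hfin.mem_toFinset
  set σ := succFn A with hσ
  have hspec : ∀ a ∈ s, IsComplArc A a (σ a) := fun a ha =>
    succFn_spec (exists_succ hfin hcard (hmem.mp ha))
  have hσmem : ∀ a ∈ s, σ a ∈ s := fun a ha => hmem.mpr (hspec a ha).2.2.1
  have hσne : ∀ a ∈ s, σ a ≠ a := fun a ha => Ne.symm (hspec a ha).1
  have hσinj : Set.InjOn σ s := fun a ha b hb e =>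
    complArc_left_unique (e ▸ hspec a ha) (hspec b hb)
  have himg : s.image σ = s := by
    apply Finset.eq_of_subset_of_card_le
    · intro x hx
      obtain ⟨a, ha, rfl⟩ := Finset.mem_image.mp hx
      exact hσmem a ha
    · rw [Finset.card_image_of_injOn hσinj]
  have hAne : A.Nonempty := Set.nonempty_of_ncard_ne_zero (by omega)
  obtain ⟨a0, ha0A⟩ := hAne
  have ha0 : a0 ∈ s := hmem.mpr ha0A
  have hsne : s.Nonempty := ⟨a0, ha0⟩
  set φ : UnitAddCircle → ℝ := fun x => arcLen a0 x with hφ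
  have hφ01 : ∀ x, 0 ≤ φ x ∧ φ x < 1 := fun x => ⟨arcLen_nonneg a0 x, arcLen_lt_one a0 x⟩
  have hφinj : ∀ {x y}, φ x = φ y → x = y := fun {x y} e => arcLen_inj e
  obtain ⟨amax, hamax, hmax⟩ := s.exists_max_image φ hsne
  have key : ∀ a ∈ s, (⌊φ (σ a) - φ a⌋ : ℝ) = if a = amax then -1 else 0 := by
    intro a ha
    by_cases hcase : a = amax
    · subst hcase
      have h1 : φ (σ a) ≤ φ a := hmax _ (hσmem a ha)
      have h2 : φ (σ a) ≠ φ a := fun e => hσne a ha (hφinj e)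
      have : (-1:ℝ) ≤ φ (σ a) - φ a := by have := (hφ01 (σ a)).1; have := (hφ01 a).2; linarith
      have hfl : ⌊φ (σ a) - φ a⌋ = -1 := by
        rw [Int.floor_eq_iff]
        push_cast
        constructor
        · linarith
        · have := lt_of_le_of_ne h1 h2; linarith
      rw [hfl, if_pos rfl]
      norm_num
    · -- show φ a < φ (σ a)
      have hne : φ (σ a) ≠ φ a := fun e => hσne a ha (hφinj e)
      have hlt : φ a < φ (σ a) := by
        by_contra hge
        push_neg at hge
        have hgt : φ (σ a) < φ a := lt_of_le_of_ne hge hne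
        -- amax violates complementarity of (a, σ a)
        have hamaxne : amax ≠ a := fun e => hcase e.symm
        have hφa : φ a < φ amax := by
          have h1 : φ a ≤ φ amax := hmax a ha
          exact lt_of_le_of_ne h1 (fun e => hamaxne (hφinj e.symm))
        have hmin := (isComplArc_iff.mp (hspec a ha)).2.2.2 amax (hmem.mp hamax) hamaxne
        have e1 : arcLen a (σ a) = φ (σ a) - φ a + 1 := by
          rw [arcLen_base a0 a (σ a), fract_of_neg (by have := (hφ01 (σ a)).1; have := (hφ01 a).2; linarith) (by linarith)]
        have e2 : arcLen a amax = φ amax - φ a := by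
          rw [arcLen_base a0 a amax, Int.fract_eq_self.mpr ⟨by linarith, by have := (hφ01 amax).2; have := (hφ01 a).1; linarith⟩]
        rw [e1, e2] at hmin
        have := (hφ01 amax).2
        have := (hφ01 (σ a)).1
        linarith
      have hfl : ⌊φ (σ a) - φ a⌋ = 0 := by
        rw [Int.floor_eq_iff]
        push_cast
        constructor
        · linarith
        · have := (hφ01 (σ a)).2; have := (hφ01 a).1; linarith
      rw [hfl, if_neg hcase]
      norm_num
  have harcφ : ∀ a ∈ s, arcLen a (σ a) = φ (σ a) - φ a - ⌊φ (σ a) - φ a⌋ := by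
    intro a ha
    rw [arcLen_base a0 a (σ a)]
    rfl
  calc ∑ a ∈ s, arcLen a (σ a)
      = ∑ a ∈ s, (φ (σ a) - φ a - ⌊φ (σ a) - φ a⌋) := Finset.sum_congr rfl harcφ
    _ = (∑ a ∈ s, φ (σ a)) - (∑ a ∈ s, φ a) - ∑ a ∈ s, (⌊φ (σ a) - φ a⌋ : ℝ) := by
        rw [← Finset.sum_sub_distrib, ← Finset.sum_sub_distrib]
    _ = 1 := by
        have hsum1 : ∑ a ∈ s, φ (σ a) = ∑ a ∈ s, φ a := by
          rw [← Finset.sum_image (fun x hx y hy e => hσinj hx hy e), himg]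
        have hsum2 : ∑ a ∈ s, (⌊φ (σ a) - φ a⌋ : ℝ) = -1 := by
          rw [Finset.sum_congr rfl key, Finset.sum_ite_eq' s amax (fun _ => (-1:ℝ)), if_pos hamax]
        rw [hsum1, hsum2]
        ring

lemma nsmul_coe (D : ℕ) (r : ℝ) :
    D • ((r : ℝ) : UnitAddCircle) = ((D * r : ℝ) : UnitAddCircle) := by
  have : ((D * r : ℝ) : UnitAddCircle) = ((D • r : ℝ) : UnitAddCircle) := by
    norm_num
  rw [this]
  exact (QuotientAddGroup.mk_nsmul _ r D).symm

lemma arcLen_nsmul (D : ℕ) (a b : UnitAddCircle) :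
    arcLen (D • a) (D • b) = Int.fract (D * arcLen a b) := by
  apply arcLen_eq_fract
  rw [← nsmul_coe, coe_arcLen, smul_sub]

lemma coe_one_eq_zero : ((1 : ℝ) : UnitAddCircle) = 0 := by
  have : ((1 : ℝ) : UnitAddCircle) = ((0 : ℝ) : UnitAddCircle) ↔ (1:ℝ) - 0 ∈ AddSubgroup.zmultiples (1:ℝ) := by
    rw [QuotientAddGroup.eq_iff_sub_mem]
  rw [show (0 : UnitAddCircle) = ((0:ℝ) : UnitAddCircle) by norm_num]
  rw [this]
  simp

/-- Complementary arcs map to complementary arcs. -/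
lemma complArc_image {N : ℕ} {d : ℕ → ℕ} {A : ℕ → Set UnitAddCircle}
    (hA : IsFormalPortrait N d A) (m : ℕ) {a b : UnitAddCircle}
    (h : IsComplArc (A m) a b) :
    IsComplArc (A (m + 1)) (d (m + 1) • a) (d (m + 1) • b) := by
  obtain ⟨hfin, hcard, hbij, hord⟩ := hA m
  set D := d (m + 1)
  have hmin := (isComplArc_iff.mp h).2.2.2
  obtain ⟨hab, ha, hb, -⟩ := h
  have hanb : D • a ≠ D • b := fun e => hab (hbij.injOn ha hb e)
  have ha' : D • a ∈ A (m + 1) := hbij.mapsTo ha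
  have hb' : D • b ∈ A (m + 1) := hbij.mapsTo hb
  rw [isComplArc_iff]
  refine ⟨hanb, ha', hb', fun x' hx' hx'a => ?_⟩
  by_contra hlt
  push_neg at hlt
  obtain ⟨x, hx, hxe⟩ := hbij.surjOn hx'
  simp only at hxe
  subst hxe
  have hxa : x ≠ a := fun e => hx'a (by rw [e])
  have hxb : x ≠ b := by
    intro e
    subst e
    exact lt_irrefl _ hlt
  have h1 : arcLen a b ≤ arcLen a x := hmin x hx hxa
  have h2 : arcLen a b ≠ arcLen a x := fun e => hxb (arcLen_inj e).symm
  have hpc : PosCyclic a b x := lt_of_le_of_ne h1 h2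
  have := hord a ha b hb x hx hab (Ne.symm hxa) (Ne.symm hxb) hpc
  exact absurd this (not_lt.mpr (le_of_lt hlt))

noncomputable def complPairs (A : Set UnitAddCircle) (hfin : A.Finite) :
    Finset (UnitAddCircle × UnitAddCircle) :=
  hfin.toFinset.image (fun a => (a, succFn A a))

lemma mem_complPairs {A : Set UnitAddCircle} (hfin : A.Finite) (hcard : 2 ≤ A.ncard)
    {p : UnitAddCircle × UnitAddCircle} :
    p ∈ complPairs A hfin ↔ IsComplArc A p.1 p.2 := by
  rw [complPairs, Finset.mem_image]
  constructor
  · rintro ⟨a, ha, rfl⟩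
    exact succFn_spec (exists_succ hfin hcard (hfin.mem_toFinset.mp ha))
  · intro h
    refine ⟨p.1, hfin.mem_toFinset.mpr h.2.1, ?_⟩
    have h2 : IsComplArc A p.1 (succFn A p.1) :=
      succFn_spec (exists_succ hfin hcard h.2.1)
    have := complArc_right_unique h2 h
    rw [this]

lemma sum_complPairs {A : Set UnitAddCircle} (hfin : A.Finite) (hcard : 2 ≤ A.ncard) :
    ∑ p ∈ complPairs A hfin, arcLen p.1 p.2 = 1 := by
  rw [complPairs, Finset.sum_image (fun a _ b _ e => (Prod.ext_iff.mp e).1)]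
  exact sum_compl_arcs hfin hcard


/-- No complementary arc of `A m` has length exactly `1/d_{m+1}`; the total
length of the non-critical complementary arcs is `< 1/d_{m+1}`; and there is
at least one critical complementary arc. -/
theorem exists_critical_arc (N : ℕ) (hN : 2 ≤ N) (d : ℕ → ℕ) (hd : ∀ m, 1 ≤ m → 2 ≤ d m)
    (A : ℕ → Set UnitAddCircle) (hA : IsFormalPortrait N d A) (m : ℕ) :
    (∀ a b : UnitAddCircle, IsComplArc (A m) a b → arcLen a b ≠ 1 / (d (m + 1) : ℝ)) ∧
    (∑ᶠ p ∈ {p : UnitAddCircle × UnitAddCircle |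
        IsComplArc (A m) p.1 p.2 ∧ arcLen p.1 p.2 < 1 / (d (m + 1) : ℝ)},
      arcLen p.1 p.2) < 1 / (d (m + 1) : ℝ) ∧
    ∃ a b : UnitAddCircle, IsComplArc (A m) a b ∧ 1 / (d (m + 1) : ℝ) < arcLen a b := by
  classical
  obtain ⟨hfin, hcard, hbij, hord⟩ := hA m
  obtain ⟨hfin1, hcard1, -, -⟩ := hA (m + 1)
  set D := d (m + 1) with hD
  have hD2 : 2 ≤ D := hd (m + 1) (by omega)
  have hDR : (2:ℝ) ≤ (D:ℝ) := by exact_mod_cast hD2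
  have hDpos : (0:ℝ) < (D:ℝ) := by linarith
  have hcm : 2 ≤ (A m).ncard := hcard ▸ hN
  have hcm1 : 2 ≤ (A (m+1)).ncard := hcard1 ▸ hN
  -- Part 1
  have part1 : ∀ a b : UnitAddCircle, IsComplArc (A m) a b → arcLen a b ≠ 1 / (D : ℝ) := by
    intro a b h heq
    have hsm : D • b - D • a = ((1:ℝ) : UnitAddCircle) := by
      rw [← smul_sub, ← coe_arcLen a b, nsmul_coe, heq]
      congr 1
      field_simp
    rw [coe_one_eq_zero] at hsm
    have : D • a = D • b := by
      have := sub_eq_zero.mp hsm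
      exact this.symm
    exact h.1 (hbij.injOn h.2.1 h.2.2.1 this)
  -- the pairs finsets
  set P := complPairs (A m) hfin with hP
  set P' := complPairs (A (m+1)) hfin1 with hP'
  have hmemP : ∀ {p}, p ∈ P ↔ IsComplArc (A m) p.1 p.2 := fun {p} => mem_complPairs hfin hcm
  have hmemP' : ∀ {p}, p ∈ P' ↔ IsComplArc (A (m+1)) p.1 p.2 :=
    fun {p} => mem_complPairs hfin1 hcm1
  set Φ : UnitAddCircle × UnitAddCircle → UnitAddCircle × UnitAddCircle :=
    fun p => (D • p.1, D • p.2) with hΦ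
  have hΦmem : ∀ p ∈ P, Φ p ∈ P' := fun p hp =>
    hmemP'.mpr (complArc_image hA m (hmemP.mp hp))
  have hΦinj : Set.InjOn Φ P := by
    intro p hp q hq e
    have hp' := hmemP.mp hp
    have hq' := hmemP.mp hq
    have e1 : D • p.1 = D • q.1 := (Prod.ext_iff.mp e).1
    have e2 : D • p.2 = D • q.2 := (Prod.ext_iff.mp e).2
    exact Prod.ext (hbij.injOn hp'.2.1 hq'.2.1 e1) (hbij.injOn hp'.2.2.1 hq'.2.2.1 e2)
  have hΦlen : ∀ p, arcLen (Φ p).1 (Φ p).2 = Int.fract ((D:ℝ) * arcLen p.1 p.2) :=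
    fun p => arcLen_nsmul D p.1 p.2
  have hlen_small : ∀ p, arcLen p.1 p.2 < 1 / (D:ℝ) →
      arcLen (Φ p).1 (Φ p).2 = (D:ℝ) * arcLen p.1 p.2 := by
    intro p hsmall
    rw [hΦlen p]
    apply Int.fract_eq_self.mpr
    constructor
    · exact mul_nonneg hDpos.le (arcLen_nonneg _ _)
    · rw [lt_div_iff₀ hDpos] at hsmall; linarith [mul_comm (arcLen p.1 p.2) (D:ℝ)]
  -- Part 3
  have part3 : ∃ a b : UnitAddCircle, IsComplArc (A m) a b ∧ 1 / (D : ℝ) < arcLen a b := by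
    by_contra hno
    push_neg at hno
    have hall : ∀ p ∈ P, arcLen p.1 p.2 < 1 / (D:ℝ) := by
      intro p hp
      have h := hmemP.mp hp
      have := hno p.1 p.2 h
      exact lt_of_le_of_ne this (part1 p.1 p.2 h)
    have hsum : ∑ p ∈ P, arcLen (Φ p).1 (Φ p).2 = (D:ℝ) := by
      rw [Finset.sum_congr rfl (fun p hp => hlen_small p (hall p hp)),
        ← Finset.mul_sum, sum_complPairs hfin hcm, mul_one]
    have hle : ∑ p ∈ P, arcLen (Φ p).1 (Φ p).2 ≤ 1 := by
      have h1 : ∑ p ∈ P, arcLen (Φ p).1 (Φ p).2 = ∑ q ∈ P.image Φ, arcLen q.1 q.2 :=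
        (Finset.sum_image (f := fun q : UnitAddCircle × UnitAddCircle => arcLen q.1 q.2)
          (fun p hp q hq e => hΦinj hp hq e)).symm
      have hsub : P.image Φ ⊆ P' := by
        intro q hq
        obtain ⟨p, hp, rfl⟩ := Finset.mem_image.mp hq
        exact hΦmem p hp
      have h2 : ∑ q ∈ P.image Φ, arcLen q.1 q.2 ≤ ∑ q ∈ P', arcLen q.1 q.2 :=
        Finset.sum_le_sum_of_subset_of_nonneg hsub (fun q _ _ => arcLen_nonneg q.1 q.2)
      calc ∑ p ∈ P, arcLen (Φ p).1 (Φ p).2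
          = ∑ q ∈ P.image Φ, arcLen q.1 q.2 := h1
        _ ≤ ∑ q ∈ P', arcLen q.1 q.2 := h2
        _ = 1 := sum_complPairs hfin1 hcm1
    rw [hsum] at hle
    linarith
  refine ⟨part1, ?_, part3⟩
  -- Part 2
  obtain ⟨a', b', hcompl', hcrit'⟩ := part3
  set pc : UnitAddCircle × UnitAddCircle := (a', b') with hpc
  have hpcP : pc ∈ P := hmemP.mpr hcompl'
  set Q := P.filter (fun p => arcLen p.1 p.2 < 1 / (D:ℝ)) with hQ
  have hSset : {p : UnitAddCircle × UnitAddCircle |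
      IsComplArc (A m) p.1 p.2 ∧ arcLen p.1 p.2 < 1 / (D : ℝ)} = ↑Q := by
    ext p
    simp only [Set.mem_setOf_eq, hQ, Finset.coe_filter, Set.mem_setOf_eq, hmemP]
  rw [hSset, finsum_mem_coe_finset]
  -- bound the sum over Q
  have hpcnotQ : pc ∉ Q := by
    rw [hQ, Finset.mem_filter]
    rintro ⟨-, hlt⟩
    exact absurd hcrit' (not_lt.mpr (le_of_lt hlt))
  have hΦpcP' : Φ pc ∈ P' := hΦmem pc hpcP
  have hΦpc_pos : 0 < arcLen (Φ pc).1 (Φ pc).2 := arcLen_pos (hmemP'.mp hΦpcP').1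
  have himg_sub : Q.image Φ ⊆ P'.erase (Φ pc) := by
    intro q hq
    obtain ⟨p, hp, rfl⟩ := Finset.mem_image.mp hq
    have hpP : p ∈ P := (Finset.mem_filter.mp hp).1
    refine Finset.mem_erase.mpr ⟨?_, hΦmem p hpP⟩
    intro e
    exact hpcnotQ ((hΦinj hpP hpcP e) ▸ hp)
  have hQsum : (D:ℝ) * ∑ p ∈ Q, arcLen p.1 p.2 ≤ 1 - arcLen (Φ pc).1 (Φ pc).2 := by
    have e1 : (D:ℝ) * ∑ p ∈ Q, arcLen p.1 p.2 = ∑ p ∈ Q, arcLen (Φ p).1 (Φ p).2 := by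
      rw [Finset.mul_sum]
      exact Finset.sum_congr rfl (fun p hp =>
        (hlen_small p (Finset.mem_filter.mp hp).2).symm)
    have e2 : ∑ p ∈ Q, arcLen (Φ p).1 (Φ p).2 = ∑ q ∈ Q.image Φ, arcLen q.1 q.2 :=
      (Finset.sum_image (f := fun q : UnitAddCircle × UnitAddCircle => arcLen q.1 q.2)
        (fun p hp q hq e =>
        hΦinj (Finset.mem_filter.mp hp).1 (Finset.mem_filter.mp hq).1 e)).symm
    have e3 : ∑ q ∈ Q.image Φ, arcLen q.1 q.2 ≤ ∑ q ∈ P'.erase (Φ pc), arcLen q.1 q.2 :=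
      Finset.sum_le_sum_of_subset_of_nonneg himg_sub (fun q _ _ => arcLen_nonneg q.1 q.2)
    have e4 : ∑ q ∈ P'.erase (Φ pc), arcLen q.1 q.2
        = (∑ q ∈ P', arcLen q.1 q.2) - arcLen (Φ pc).1 (Φ pc).2 :=
      Finset.sum_erase_eq_sub hΦpcP'
    calc (D:ℝ) * ∑ p ∈ Q, arcLen p.1 p.2
        = ∑ p ∈ Q, arcLen (Φ p).1 (Φ p).2 := e1
      _ = ∑ q ∈ Q.image Φ, arcLen q.1 q.2 := e2
      _ ≤ ∑ q ∈ P'.erase (Φ pc), arcLen q.1 q.2 := e3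
      _ = 1 - arcLen (Φ pc).1 (Φ pc).2 := by rw [e4, sum_complPairs hfin1 hcm1]
  rw [lt_div_iff₀ hDpos]
  calc (∑ p ∈ Q, arcLen p.1 p.2) * (D:ℝ) = (D:ℝ) * ∑ p ∈ Q, arcLen p.1 p.2 := mul_comm _ _
    _ ≤ 1 - arcLen (Φ pc).1 (Φ pc).2 := hQsum
    _ < 1 := by linarith
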